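/- arXiv:1512.05116 — 6 statements merged into one kernel-verified Lean document; each statement's English description precedes it below -/
import Mathlib

section
/- If a trajectory of the point-vortex system returns to a state similar to its initial state with scale factor of modulus different from 1, then the angular momentum of the circulations vanishes: if t ↦ z(t) is a trajectory defined on an interval containing 0 and t₁, and there exist a, b ∈ ℂ with |a| ≠ 1 such that z_k(t₁) = a z_k(0) + b for all k, then L = Σ_{i<j} Γ_i Γ_j = 0. In particular, if a collapsing (self-similar, shrinking) configuration exists for the circulations Γ, then L = 0. -/
/-- The velocity of the `k`-th vortex of a system of `n` point vortices at positions
`z : Fin n → ℂ` with circulations `Γ : Fin n → ℝ`: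
`V_k(z) = (i/(2π)) Σ_{l≠k} Γ_l (z_k − z_l)/|z_k − z_l|²`. -/
noncomputable def vortexVelocity (n : ℕ) (Γ : Fin n → ℝ) (z : Fin n → ℂ) (k : Fin n) : ℂ :=
  (Complex.I / (2 * Real.pi)) *
    ∑ l ∈ Finset.univ.filter (fun l => l ≠ k),
      (Γ l : ℂ) * (z k - z l) / ((‖z k - z l‖ ^ 2 : ℝ) : ℂ)

lemma pairSum_aux {M : Type*} [AddCommMonoid M] {n : ℕ} (f : Fin n → Fin n → M) :
    (∑ i, ∑ j ∈ Finset.univ.filter (fun j => i < j), (f i j + f j i)) =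
    ∑ i, ∑ j ∈ Finset.univ.filter (fun j => j ≠ i), f i j := by
  simp only [Finset.sum_filter, Finset.sum_add_distrib]
  rw [show (∑ i, ∑ j, if i < j then f j i else 0)
      = ∑ i, ∑ j, if j < i then f i j else 0 from Finset.sum_comm]
  rw [← Finset.sum_add_distrib]
  congr 1; ext i
  rw [← Finset.sum_add_distrib]
  congr 1; ext j
  rcases lt_trichotomy i j with h | h | h
  · simp [h, not_lt_of_gt h, h.ne']
  · simp [h]
  · simp [h, not_lt_of_gt h, h.ne]

lemma vortexVelocity_eq_conj (n : ℕ) (Γ : Fin n → ℝ) (z : Fin n → ℂ)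
    (hz : Function.Injective z) (k : Fin n) :
    vortexVelocity n Γ z k = (Complex.I / (2 * Real.pi)) *
      (starRingEnd ℂ) (∑ l ∈ Finset.univ.filter (fun l => l ≠ k), (Γ l : ℂ) * (z k - z l)⁻¹) := by
  rw [vortexVelocity, map_sum]
  congr 1
  apply Finset.sum_congr rfl
  intro l hl
  have hne : z k - z l ≠ 0 := sub_ne_zero.2 fun h => (Finset.mem_filter.1 hl).2 (hz h.symm)
  rw [map_mul, Complex.conj_ofReal, map_inv₀]
  have h1 : ((‖z k - z l‖ ^ 2 : ℝ) : ℂ) = (z k - z l) * (starRingEnd ℂ) (z k - z l) := by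
    rw [Complex.mul_conj]; norm_cast
    rw [Complex.normSq_eq_norm_sq]
  rw [h1, mul_div_assoc, div_mul_cancel_left₀ hne]

lemma vortex_re_sum_zero (n : ℕ) (Γ : Fin n → ℝ) (z : Fin n → ℂ) (hz : Function.Injective z) :
    ∑ i, ∑ j ∈ Finset.univ.filter (fun j => i < j),
      Γ i * Γ j * ((vortexVelocity n Γ z i - vortexVelocity n Γ z j) / (z i - z j)).re = 0 := by
  set c : ℂ := Complex.I / (2 * Real.pi) with hc
  set u : Fin n → ℂ := fun k => ∑ l ∈ Finset.univ.filter (fun l => l ≠ k), (Γ l : ℂ) * (z k - z l)⁻¹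
    with hu
  have hV : ∀ k, vortexVelocity n Γ z k = c * (starRingEnd ℂ) (u k) :=
    fun k => vortexVelocity_eq_conj n Γ z hz k
  set f : Fin n → Fin n → ℂ := fun i j =>
    (Γ i : ℂ) * (vortexVelocity n Γ z i) * ((Γ j : ℂ) * (z i - z j)⁻¹) with hf
  have step1 : ∑ i, ∑ j ∈ Finset.univ.filter (fun j => i < j),
      Γ i * Γ j * ((vortexVelocity n Γ z i - vortexVelocity n Γ z j) / (z i - z j)).re
      = (∑ i, ∑ j ∈ Finset.univ.filter (fun j => i < j), (f i j + f j i)).re := by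
    rw [Complex.re_sum]
    apply Finset.sum_congr rfl; intro i _
    rw [Complex.re_sum]
    apply Finset.sum_congr rfl; intro j hj
    have h2 : f i j + f j i =
        ((Γ i * Γ j : ℝ) : ℂ) * ((vortexVelocity n Γ z i - vortexVelocity n Γ z j) / (z i - z j)) := by
      simp only [hf]
      rw [show z j - z i = -(z i - z j) by ring, inv_neg, div_eq_mul_inv]
      push_cast; ring
    rw [h2, Complex.re_ofReal_mul]
  rw [step1, pairSum_aux f]
  have step3 : ∀ i, ∑ j ∈ Finset.univ.filter (fun j => j ≠ i), f i j
      = (Γ i : ℂ) * (vortexVelocity n Γ z i) * u i := by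
    intro i
    rw [hu, Finset.mul_sum]
  have step4 : ∑ i, ∑ j ∈ Finset.univ.filter (fun j => j ≠ i), f i j
      = c * ((∑ i, Γ i * Complex.normSq (u i) : ℝ) : ℂ) := by
    rw [Finset.sum_congr rfl (fun i _ => step3 i)]
    push_cast
    rw [Finset.mul_sum]
    apply Finset.sum_congr rfl; intro i _
    rw [hV i]
    rw [show (Γ i : ℂ) * (c * (starRingEnd ℂ) (u i)) * u i
        = c * ((Γ i : ℂ) * ((starRingEnd ℂ) (u i) * u i)) by ring]
    rw [show (starRingEnd ℂ) (u i) * u i = ((Complex.normSq (u i) : ℝ) : ℂ) by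
      rw [mul_comm, Complex.mul_conj]]
  rw [step4]
  simp [hc, Complex.div_re, Complex.mul_re]

lemma hasDerivAt_log_norm {g : ℝ → ℂ} {g' : ℂ} {t : ℝ}
    (hg : HasDerivAt g g' t) (hne : g t ≠ 0) :
    HasDerivAt (fun τ => Real.log ‖g τ‖) ((g' / g t).re) t := by
  have hre : HasDerivAt (fun τ => (g τ).re) g'.re t :=
    Complex.reCLM.hasFDerivAt.comp_hasDerivAt t hg
  have him : HasDerivAt (fun τ => (g τ).im) g'.im t :=
    Complex.imCLM.hasFDerivAt.comp_hasDerivAt t hg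
  have hnsq : HasDerivAt (fun τ => Complex.normSq (g τ))
      (g'.re * (g t).re + (g t).re * g'.re + (g'.im * (g t).im + (g t).im * g'.im)) t := by
    simpa [Complex.normSq_apply] using (hre.fun_mul hre).fun_add (him.fun_mul him)
  have hnsq0 : Complex.normSq (g t) ≠ 0 := (Complex.normSq_pos.mpr hne).ne'
  have hlog := (hnsq.log hnsq0).const_mul (1/2 : ℝ)
  have heq : (fun τ => Real.log ‖g τ‖) = fun τ => (1/2 : ℝ) * Real.log (Complex.normSq (g τ)) := by
    funext τ
    rw [show Complex.normSq (g τ) = ‖g τ‖ ^ 2 by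
      rw [Complex.normSq_eq_norm_sq], Real.log_pow]
    push_cast; ring
  rw [heq]
  refine hlog.congr_deriv ?_
  rw [Complex.div_re]
  field_simp
  ring

lemma eq_of_hasDerivAt_zero {F : ℝ → ℝ} {s : Set ℝ} (hs : s.OrdConnected)
    (h : ∀ t ∈ s, HasDerivAt F 0 t) {x y : ℝ} (hx : x ∈ s) (hy : y ∈ s) (hxy : x ≤ y) :
    F y = F x := by
  have hsub : Set.Icc x y ⊆ s := hs.out hx hy
  exact constant_of_has_deriv_right_zero
    (fun u hu => (h u (hsub hu)).continuousAt.continuousWithinAt)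
    (fun u hu => (h u (hsub (Set.Ico_subset_Icc_self hu))).hasDerivWithinAt)
    y (Set.mem_Icc.2 ⟨hxy, le_refl y⟩)

/-- If a trajectory returns to a state similar to its initial state with scale factor of
modulus different from 1, then the angular momentum `L = Σ_{i<j} Γ_i Γ_j` vanishes. -/
theorem angular_momentum_eq_zero_of_similar_return
    (n : ℕ) (Γ : Fin n → ℝ) (hΓ : ∀ k, Γ k ≠ 0)
    (s : Set ℝ) (hs : s.OrdConnected)
    (z : ℝ → Fin n → ℂ)
    (hinj : ∀ t ∈ s, Function.Injective (z t))
    (hderiv : ∀ t ∈ s, ∀ k, HasDerivAt (fun τ => z τ k) (vortexVelocity n Γ (z t) k) t)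
    (t₁ : ℝ) (h0 : (0 : ℝ) ∈ s) (ht₁ : t₁ ∈ s)
    (a b : ℂ) (ha : ‖a‖ ≠ 1)
    (hsim : ∀ k, z t₁ k = a * z 0 k + b) :
    ∑ i, ∑ j ∈ Finset.univ.filter (fun j => i < j), Γ i * Γ j = 0 := by
  by_cases hn : n ≤ 1
  · apply Finset.sum_eq_zero
    intro i _
    apply Finset.sum_eq_zero
    intro j hj
    have := (Finset.mem_filter.1 hj).2
    exact absurd this (by omega)
  push_neg at hn
  -- a ≠ 0
  have ha0 : a ≠ 0 := by
    intro h
    have h01 : z t₁ ⟨0, by omega⟩ = z t₁ ⟨1, by omega⟩ := by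
      rw [hsim, hsim, h]; simp
    have := hinj t₁ ht₁ h01
    simp [Fin.ext_iff] at this
  have hna : ‖a‖ ≠ 0 := norm_ne_zero_iff.2 ha0
  set F : ℝ → ℝ := fun τ => ∑ i, ∑ j ∈ Finset.univ.filter (fun j => i < j),
      Γ i * Γ j * Real.log ‖z τ i - z τ j‖ with hF
  have hF0 : ∀ t ∈ s, HasDerivAt F 0 t := by
    intro t ht
    have hD : HasDerivAt F (∑ i, ∑ j ∈ Finset.univ.filter (fun j => i < j),
        Γ i * Γ j * ((vortexVelocity n Γ (z t) i - vortexVelocity n Γ (z t) j)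
          / (z t i - z t j)).re) t := by
      apply HasDerivAt.fun_sum
      intro i _
      apply HasDerivAt.fun_sum
      intro j hj
      have hij : i ≠ j := ne_of_lt (Finset.mem_filter.1 hj).2
      have hne : z t i - z t j ≠ 0 := sub_ne_zero.2 fun h => hij (hinj t ht h)
      exact (hasDerivAt_log_norm ((hderiv t ht i).sub (hderiv t ht j)) hne).const_mul (Γ i * Γ j)
    rwa [vortex_re_sum_zero n Γ (z t) (hinj t ht)] at hD
  have key : F t₁ = F 0 := by
    rcases le_total 0 t₁ with h | h
    · exact eq_of_hasDerivAt_zero hs hF0 h0 ht₁ h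
    · exact (eq_of_hasDerivAt_zero hs hF0 ht₁ h0 h).symm
  have hexpand : F t₁ = (∑ i, ∑ j ∈ Finset.univ.filter (fun j => i < j), Γ i * Γ j)
      * Real.log ‖a‖ + F 0 := by
    rw [hF]
    simp only
    rw [Finset.sum_mul, ← Finset.sum_add_distrib]
    apply Finset.sum_congr rfl; intro i _
    rw [Finset.sum_mul, ← Finset.sum_add_distrib]
    apply Finset.sum_congr rfl; intro j hj
    have hij : i ≠ j := ne_of_lt (Finset.mem_filter.1 hj).2
    have hne : z 0 i - z 0 j ≠ 0 := sub_ne_zero.2 fun h => hij (hinj 0 h0 h)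
    have h3 : z t₁ i - z t₁ j = a * (z 0 i - z 0 j) := by rw [hsim, hsim]; ring
    rw [h3, norm_mul, Real.log_mul hna (norm_ne_zero_iff.2 hne)]
    ring
  have hmul : (∑ i, ∑ j ∈ Finset.univ.filter (fun j => i < j), Γ i * Γ j) * Real.log ‖a‖ = 0 := by
    linarith [key, hexpand]
  rcases mul_eq_zero.1 hmul with h | h
  · exact h
  · exfalso
    rcases Real.log_eq_zero.1 h with h' | h' | h'
    · exact hna h'
    · exact ha h'
    · linarith [norm_nonneg a]
end

section
/- Rotational configurations rotate rigidly: if w ∈ ℂ^n has pairwise distinct components and V_k(w) = iλ (w_k − p) for all k, where λ ∈ ℝ, λ ≠ 0, p ∈ ℂ, then the curve z_k(t) = p + e^{iλt}(w_k − p) is a trajectory of the point-vortex system for all t ∈ ℝ, with z(0) = w. -/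
lemma exp_norm_one (lam t : ℝ) : ‖Complex.exp (Complex.I * lam * t)‖ = 1 := by
  have : Complex.I * lam * t = ((lam * t : ℝ) : ℂ) * Complex.I := by push_cast; ring
  rw [this]
  simpa using Complex.norm_exp_ofReal_mul_I (lam * t)

/-- Rotational configurations rotate rigidly: if `V_k(w) = iλ(w_k − p)` with `λ ≠ 0`, then
`z_k(t) = p + e^{iλt}(w_k − p)` is a trajectory with `z(0) = w`. -/
theorem rotational_configuration_trajectory
    (n : ℕ) (Γ : Fin n → ℝ) (hΓ : ∀ k, Γ k ≠ 0)
    (w : Fin n → ℂ) (hw : Function.Injective w)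
    (lam : ℝ) (hlam : lam ≠ 0) (p : ℂ)
    (hv : ∀ k, vortexVelocity n Γ w k = Complex.I * lam * (w k - p)) :
    (∀ t : ℝ, Function.Injective
        (fun k => p + Complex.exp (Complex.I * lam * t) * (w k - p))) ∧
    (∀ t : ℝ, ∀ k, HasDerivAt
        (fun τ : ℝ => p + Complex.exp (Complex.I * lam * τ) * (w k - p))
        (vortexVelocity n Γ (fun j => p + Complex.exp (Complex.I * lam * t) * (w j - p)) k)
        t) ∧
    (fun k => p + Complex.exp (Complex.I * lam * (0 : ℝ)) * (w k - p)) = w := by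
  have hexp0 : ∀ t : ℝ, Complex.exp (Complex.I * lam * t) ≠ 0 := fun t => Complex.exp_ne_zero _
  refine ⟨?_, ?_, ?_⟩
  · intro t k l h
    simp only at h
    have : Complex.exp (Complex.I * lam * t) * (w k - p)
        = Complex.exp (Complex.I * lam * t) * (w l - p) := by linear_combination h
    have := mul_left_cancel₀ (hexp0 t) this
    exact hw (by linear_combination this)
  · intro t k
    -- compute the velocity at rotated positions
    have hV : vortexVelocity n Γ (fun j => p + Complex.exp (Complex.I * lam * t) * (w j - p)) k
        = Complex.exp (Complex.I * lam * t) * (Complex.I * lam * (w k - p)) := by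
      rw [← hv k]
      unfold vortexVelocity
      simp only [Finset.mul_sum]
      refine Finset.sum_congr rfl fun l hl => ?_
      have hd : (p + Complex.exp (Complex.I * lam * t) * (w k - p))
          - (p + Complex.exp (Complex.I * lam * t) * (w l - p))
          = Complex.exp (Complex.I * lam * t) * (w k - w l) := by ring
      rw [hd, norm_mul, exp_norm_one, one_mul]
      field_simp
    rw [hV]
    have h1 : HasDerivAt (fun τ : ℝ => Complex.I * lam * (τ : ℂ)) (Complex.I * lam) t := by
      simpa using (Complex.ofRealCLM.hasDerivAt (x := t)).const_mul (Complex.I * lam)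
    have h2 := (h1.cexp.mul_const (w k - p)).const_add p
    convert h2 using 1
    · rfl
    ring
  · funext k
    simp
end

section
/- Collapsing configurations evolve self-similarly and collapse to a point in finite time: let w ∈ ℂ^n have pairwise distinct components and suppose V_k(w) = ω (w_k − p) for all k, where ω, p ∈ ℂ with Re(ω) < 0. Set t₀ = −1/(2 Re(ω)) > 0 and, for t ∈ (−∞, t₀), define z_k(t) = p + √(2 Re(ω) t + 1) · exp(i (Im(ω)/(2 Re(ω))) ln(2 Re(ω) t + 1)) · (w_k − p). Then t ↦ z(t) is a trajectory of the point-vortex system on (−∞, t₀) with z(0) = w, and |z_k(t) − p| → 0 as t → t₀ from below, for every k. -/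
/-- Collapsing configurations evolve self-similarly and collapse to a point in finite
time: if `V_k(w) = ω(w_k − p)` with `Re ω < 0`, `t₀ = −1/(2 Re ω) > 0`, and
`z_k(t) = p + √(2 Re(ω) t + 1) exp(i (Im ω/(2 Re ω)) ln(2 Re(ω) t + 1)) (w_k − p)`,
then `z` is a trajectory on `(−∞, t₀)` with `z(0) = w` and `|z_k(t) − p| → 0` as
`t → t₀⁻`. -/
theorem collapsing_configuration_trajectory
    (n : ℕ) (Γ : Fin n → ℝ) (hΓ : ∀ k, Γ k ≠ 0)
    (w : Fin n → ℂ) (hw : Function.Injective w)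
    (ω p : ℂ) (hre : ω.re < 0)
    (hv : ∀ k, vortexVelocity n Γ w k = ω * (w k - p))
    (t₀ : ℝ) (ht₀ : t₀ = -1 / (2 * ω.re))
    (z : ℝ → Fin n → ℂ)
    (hz : ∀ t k, z t k = p + (Real.sqrt (2 * ω.re * t + 1) : ℂ)
        * Complex.exp (Complex.I * ((ω.im / (2 * ω.re) : ℝ) : ℂ)
            * ((Real.log (2 * ω.re * t + 1) : ℝ) : ℂ))
        * (w k - p)) :
    0 < t₀ ∧
    (∀ t ∈ Set.Iio t₀, Function.Injective (z t)) ∧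
    (∀ t ∈ Set.Iio t₀, ∀ k,
        HasDerivAt (fun τ => z τ k) (vortexVelocity n Γ (z t) k) t) ∧
    z 0 = w ∧
    (∀ k, Filter.Tendsto (fun t => ‖z t k - p‖) (nhdsWithin t₀ (Set.Iio t₀))
        (nhds 0)) := by
  set a : ℝ := 2 * ω.re with ha_def
  have ha : a < 0 := by simp only [ha_def]; linarith
  have ha0 : a ≠ 0 := ne_of_lt ha
  set c : ℝ := ω.im / a with hc_def
  set μ : ℂ := (1/2 : ℂ) + Complex.I * (c : ℂ) with hμ_def
  have hμa : μ * (a : ℂ) = ω := by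
    have h1 : (c : ℝ) * a = ω.im := by rw [hc_def]; field_simp
    have h2 : μ * (a : ℂ) = ((a/2 : ℝ) : ℂ) + ((c * a : ℝ) : ℂ) * Complex.I := by
      rw [hμ_def]; push_cast; ring
    rw [h2, h1]
    have h3 : (a/2 : ℝ) = ω.re := by rw [ha_def]; ring
    rw [h3, Complex.re_add_im]
  set F : ℝ → ℂ := fun t => Complex.exp (μ * ((Real.log (a * t + 1) : ℝ) : ℂ)) with hF_def
  have hFne : ∀ t, F t ≠ 0 := fun t => Complex.exp_ne_zero _
  -- rewrite z in terms of F when a*t+1 > 0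
  have hzF : ∀ t, 0 < a * t + 1 → ∀ k, z t k = p + F t * (w k - p) := by
    intro t hs k
    rw [hz t k]
    have hL : Real.exp (Real.log (a * t + 1) / 2) = Real.sqrt (a * t + 1) := by
      rw [← Real.log_sqrt hs.le, Real.exp_log (Real.sqrt_pos.2 hs)]
    have : Complex.exp (μ * ((Real.log (a * t + 1) : ℝ) : ℂ))
        = ((Real.sqrt (a * t + 1) : ℝ) : ℂ)
          * Complex.exp (Complex.I * (c : ℂ) * ((Real.log (a * t + 1) : ℝ) : ℂ)) := by
      rw [← hL]
      rw [show μ * ((Real.log (a * t + 1) : ℝ) : ℂ)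
          = ((Real.log (a * t + 1) / 2 : ℝ) : ℂ)
            + Complex.I * (c : ℂ) * ((Real.log (a * t + 1) : ℝ) : ℂ) by
        rw [hμ_def]; push_cast; ring]
      rw [Complex.exp_add, Complex.ofReal_exp]
    simp only [hF_def]
    rw [this]
  -- norm of F
  have hFnorm : ∀ t, 0 < a * t + 1 → (‖F t‖ : ℝ) ^ 2 = a * t + 1 := by
    intro t hs
    have hre' : (μ * ((Real.log (a * t + 1) : ℝ) : ℂ)).re = Real.log (a * t + 1) / 2 := by
      rw [hμ_def]
      simp [Complex.add_re, Complex.mul_re, Complex.ofReal_re, Complex.ofReal_im]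
      ring
    rw [hF_def]
    simp only [Complex.norm_exp, hre']
    rw [pow_two, ← Real.exp_add]
    rw [show Real.log (a*t+1)/2 + Real.log (a*t+1)/2 = Real.log (a*t+1) by ring]
    exact Real.exp_log hs
  -- derivative of F
  have hFderiv : ∀ t, 0 < a * t + 1 → HasDerivAt F (ω / ((a * t + 1 : ℝ) : ℂ) * F t) t := by
    intro t hs
    have h1 : HasDerivAt (fun τ : ℝ => a * τ + 1) a t := by
      simpa using ((hasDerivAt_id t).const_mul a).add_const 1
    have h2 : HasDerivAt (fun τ => Real.log (a * τ + 1)) (a / (a * t + 1)) t := by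
      have := (Real.hasDerivAt_log (ne_of_gt hs)).comp t h1
      simpa [Function.comp_def, div_eq_inv_mul, mul_comm] using this
    have h3 := (h2.ofReal_comp).const_mul μ
    have h4 := h3.cexp
    convert h4 using 1
    rw [show ((a / (a*t+1) : ℝ) : ℂ) = (a : ℂ) / ((a*t+1 : ℝ) : ℂ) by push_cast; ring]
    rw [← hμa]
    have hsne : ((a*t+1 : ℝ) : ℂ) ≠ 0 := by
      exact_mod_cast Complex.ofReal_ne_zero.2 (ne_of_gt hs)
    field_simp
    ring
  -- velocity identity
  have hV : ∀ t, 0 < a * t + 1 → ∀ k,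
      vortexVelocity n Γ (z t) k = ω / ((a * t + 1 : ℝ) : ℂ) * F t * (w k - p) := by
    intro t hs k
    have hzk := hzF t hs
    have hsne : ((a*t+1 : ℝ) : ℂ) ≠ 0 := Complex.ofReal_ne_zero.2 (ne_of_gt hs)
    have key : ∀ l ∈ Finset.univ.filter (fun l => l ≠ k),
        (Γ l : ℂ) * (z t k - z t l) / ((‖z t k - z t l‖ ^ 2 : ℝ) : ℂ)
        = F t / ((a*t+1 : ℝ) : ℂ)
          * ((Γ l : ℂ) * (w k - w l) / ((‖w k - w l‖ ^ 2 : ℝ) : ℂ)) := by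
      intro l hl
      have hlk : l ≠ k := by simpa using hl
      have hwne : w k - w l ≠ 0 := sub_ne_zero.2 fun h => hlk (hw h).symm
      have hdiff : z t k - z t l = F t * (w k - w l) := by
        rw [hzk k, hzk l]; ring
      have hnorm : (‖z t k - z t l‖ ^ 2 : ℝ) = (a*t+1) * ‖w k - w l‖ ^ 2 := by
        rw [hdiff, norm_mul, mul_pow, hFnorm t hs]
      rw [hnorm, hdiff]
      have hwn : ((‖w k - w l‖ ^ 2 : ℝ) : ℂ) ≠ 0 := by
        exact_mod_cast Complex.ofReal_ne_zero.2 (pow_ne_zero 2 (norm_ne_zero_iff.2 hwne))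
      push_cast
      field_simp
    unfold vortexVelocity
    rw [Finset.sum_congr rfl key, ← Finset.mul_sum]
    have hvw := hv k
    unfold vortexVelocity at hvw
    calc Complex.I / (2 * Real.pi) * (F t / ((a*t+1 : ℝ) : ℂ)
          * ∑ l ∈ Finset.univ.filter (fun l => l ≠ k),
            (Γ l : ℂ) * (w k - w l) / ((‖w k - w l‖ ^ 2 : ℝ) : ℂ))
        = F t / ((a*t+1 : ℝ) : ℂ) * (Complex.I / (2 * Real.pi)
          * ∑ l ∈ Finset.univ.filter (fun l => l ≠ k),
            (Γ l : ℂ) * (w k - w l) / ((‖w k - w l‖ ^ 2 : ℝ) : ℂ)) := by ring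
      _ = F t / ((a*t+1 : ℝ) : ℂ) * (ω * (w k - p)) := by rw [hvw]
      _ = ω / ((a*t+1 : ℝ) : ℂ) * F t * (w k - p) := by ring
  have hst : ∀ t, t < t₀ → 0 < a * t + 1 := by
    intro t ht
    have : a * t₀ < a * t := mul_lt_mul_of_neg_left ht ha
    have ht0 : a * t₀ = -1 := by rw [ht₀, ha_def]; field_simp; simp [div_self hre.ne]
    linarith
  have hat0 : a * t₀ + 1 = 0 := by
    rw [ht₀, ha_def]; field_simp; simp [div_self hre.ne]
  refine ⟨?_, ?_, ?_, ?_, ?_⟩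
  · rw [ht₀]
    have : 0 < -(2*ω.re) := by linarith
    rw [div_pos_iff]
    right
    constructor <;> linarith
  · intro t ht k l hkl
    have hs := hst t ht
    rw [hzF t hs k, hzF t hs l] at hkl
    have h1 : F t * (w k - p) = F t * (w l - p) := by
      have := add_left_cancel hkl
      exact this
    have h2 := mul_left_cancel₀ (hFne t) h1
    exact hw (by linear_combination h2)
  · intro t ht k
    have hs := hst t ht
    have hD : HasDerivAt (fun τ => p + F τ * (w k - p))
        (ω / ((a * t + 1 : ℝ) : ℂ) * F t * (w k - p)) t := by
      have := ((hFderiv t hs).mul_const (w k - p)).const_add p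
      exact this
    have hev : (fun τ => z τ k) =ᶠ[nhds t] (fun τ => p + F τ * (w k - p)) := by
      have hopen : IsOpen {τ : ℝ | 0 < a * τ + 1} :=
        isOpen_lt continuous_const ((continuous_const.mul continuous_id).add continuous_const)
      filter_upwards [hopen.mem_nhds hs] with τ hτ
      exact hzF τ hτ k
    have := hD.congr_of_eventuallyEq hev
    rw [hV t hs k]
    exact this
  · funext k
    rw [hz 0 k]
    norm_num
  · intro k
    have heq : ∀ t, ‖z t k - p‖ = Real.sqrt (a * t + 1) * ‖w k - p‖ := by
      intro t
      rw [hz t k]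
      rw [show p + (Real.sqrt (a*t+1) : ℂ) * Complex.exp (Complex.I * (c : ℂ)
          * ((Real.log (a*t+1) : ℝ) : ℂ)) * (w k - p) - p
        = (Real.sqrt (a*t+1) : ℂ) * Complex.exp (Complex.I * (c : ℂ)
          * ((Real.log (a*t+1) : ℝ) : ℂ)) * (w k - p) by ring]
      rw [norm_mul, norm_mul]
      have h1 : ‖((Real.sqrt (a*t+1) : ℝ) : ℂ)‖ = Real.sqrt (a*t+1) := by
        rw [Complex.norm_real]
        exact abs_of_nonneg (Real.sqrt_nonneg _)
      have h2 : ‖Complex.exp (Complex.I * (c : ℂ) * ((Real.log (a*t+1) : ℝ) : ℂ))‖ = 1 := by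
        rw [Complex.norm_exp]
        have : (Complex.I * (c : ℂ) * ((Real.log (a*t+1) : ℝ) : ℂ)).re = 0 := by
          simp [Complex.mul_re, Complex.I_re, Complex.I_im]
        rw [this, Real.exp_zero]
      rw [h1, h2, mul_one]
    simp only [heq]
    have hcont : Filter.Tendsto (fun t => Real.sqrt (a * t + 1) * ‖w k - p‖)
        (nhds t₀) (nhds 0) := by
      have : Continuous (fun t => Real.sqrt (a * t + 1) * ‖w k - p‖) :=
        (Real.continuous_sqrt.comp ((continuous_const.mul continuous_id).add
          continuous_const)).mul continuous_const
      have h := this.tendsto t₀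
      simpa [hat0, Real.sqrt_zero] using h
    exact hcont.mono_left nhdsWithin_le_nhds
end

section
/- Expanding configurations evolve self-similarly for all positive time: let w ∈ ℂ^n have pairwise distinct components and suppose V_k(w) = ω (w_k − p) for all k, where ω, p ∈ ℂ with Re(ω) > 0. Then for t ∈ (−1/(2 Re(ω)), ∞), the curve z_k(t) = p + √(2 Re(ω) t + 1) · exp(i (Im(ω)/(2 Re(ω))) ln(2 Re(ω) t + 1)) · (w_k − p) is a trajectory of the point-vortex system with z(0) = w. -/
/-- Expanding configurations evolve self-similarly for all positive time: if
`V_k(w) = ω(w_k − p)` with `Re ω > 0`, then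
`z_k(t) = p + √(2 Re(ω) t + 1) exp(i (Im ω/(2 Re ω)) ln(2 Re(ω) t + 1)) (w_k − p)`
is a trajectory on `(−1/(2 Re ω), ∞)` with `z(0) = w`. -/
theorem expanding_configuration_trajectory
    (n : ℕ) (Γ : Fin n → ℝ) (hΓ : ∀ k, Γ k ≠ 0)
    (w : Fin n → ℂ) (hw : Function.Injective w)
    (ω p : ℂ) (hre : 0 < ω.re)
    (hv : ∀ k, vortexVelocity n Γ w k = ω * (w k - p))
    (z : ℝ → Fin n → ℂ)
    (hz : ∀ t k, z t k = p + (Real.sqrt (2 * ω.re * t + 1) : ℂ)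
        * Complex.exp (Complex.I * ((ω.im / (2 * ω.re) : ℝ) : ℂ)
            * ((Real.log (2 * ω.re * t + 1) : ℝ) : ℂ))
        * (w k - p)) :
    (∀ t ∈ Set.Ioi (-1 / (2 * ω.re)), Function.Injective (z t)) ∧
    (∀ t ∈ Set.Ioi (-1 / (2 * ω.re)), ∀ k,
        HasDerivAt (fun τ => z τ k) (vortexVelocity n Γ (z t) k) t) ∧
    z 0 = w := by
  have h2a : (0:ℝ) < 2 * ω.re := by linarith
  -- positivity of s(t) on the interval
  have hs : ∀ t ∈ Set.Ioi (-1 / (2 * ω.re)), (0:ℝ) < 2 * ω.re * t + 1 := by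
    intro t ht
    have ht' : -1 / (2 * ω.re) < t := ht
    nlinarith [ht', h2a, mul_lt_mul_of_pos_left ht' h2a,
      mul_div_cancel₀ (-1 : ℝ) (ne_of_gt h2a)]
  set b : ℝ := ω.im / (2 * ω.re) with hb
  -- the scalar factor
  set c : ℝ → ℂ := fun t => (Real.sqrt (2 * ω.re * t + 1) : ℂ)
      * Complex.exp (Complex.I * (b : ℂ) * ((Real.log (2 * ω.re * t + 1) : ℝ) : ℂ)) with hc
  have hznorm : ∀ t, ‖Complex.exp (Complex.I * (b : ℂ)
      * ((Real.log (2 * ω.re * t + 1) : ℝ) : ℂ))‖ = 1 := by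
    intro t
    rw [Complex.norm_exp]
    simp
  have hcnorm : ∀ t ∈ Set.Ioi (-1 / (2 * ω.re)), ‖c t‖ ^ 2 = 2 * ω.re * t + 1 := by
    intro t ht
    have hst := hs t ht
    rw [hc]
    simp only [norm_mul, hznorm t, mul_one, Complex.norm_real, Real.norm_eq_abs,
      abs_of_nonneg (Real.sqrt_nonneg _)]
    exact Real.sq_sqrt hst.le
  have hcne : ∀ t ∈ Set.Ioi (-1 / (2 * ω.re)), c t ≠ 0 := by
    intro t ht h0
    have := hcnorm t ht
    rw [h0] at this
    simp at this
    linarith [hs t ht]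
  have hzc : ∀ t k, z t k = p + c t * (w k - p) := fun t k => hz t k
  -- injectivity
  refine ⟨?_, ?_, ?_⟩
  · intro t ht k l hkl
    rw [hzc t k, hzc t l] at hkl
    have : c t * (w k - p) = c t * (w l - p) := by linear_combination hkl
    have := mul_left_cancel₀ (hcne t ht) this
    exact hw (by linear_combination this)
  · intro t ht k
    have hst := hs t ht
    set s : ℝ := 2 * ω.re * t + 1 with hsdef
    have hsne : s ≠ 0 := ne_of_gt hst
    have hsqpos : (0:ℝ) < Real.sqrt s := Real.sqrt_pos.2 hst
    have hsqne : Real.sqrt s ≠ 0 := ne_of_gt hsqpos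
    -- scaling of the velocity
    have hvel : vortexVelocity n Γ (z t) k = c t / (s : ℂ) * (ω * (w k - p)) := by
      rw [← hv k]
      unfold vortexVelocity
      simp only [Finset.mul_sum]
      refine Finset.sum_congr rfl fun l hl => ?_
      have hdiff : z t k - z t l = c t * (w k - w l) := by
        rw [hzc t k, hzc t l]; ring
      have hn : ‖c t * (w k - w l)‖ ^ 2 = s * ‖w k - w l‖ ^ 2 := by
        rw [norm_mul, mul_pow, hcnorm t ht]
      rw [hdiff, hn]
      rcases eq_or_ne (w k) (w l) with h | h
      · simp [h]
      · have hwn : (‖w k - w l‖ : ℝ) ≠ 0 := by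
          simp [sub_eq_zero, h]
        have hwnC : ((‖w k - w l‖ : ℝ) : ℂ) ≠ 0 := Complex.ofReal_ne_zero.2 hwn
        have hsneC : ((s : ℝ) : ℂ) ≠ 0 := Complex.ofReal_ne_zero.2 hsne
        push_cast
        field_simp
    rw [hvel]
    -- derivative of s
    have hds : HasDerivAt (fun τ : ℝ => 2 * ω.re * τ + 1) (2 * ω.re) t := by
      simpa using ((hasDerivAt_id t).const_mul (2 * ω.re)).add_const 1
    -- derivative of sqrt part
    have hdsqrt : HasDerivAt (fun τ : ℝ => Real.sqrt (2 * ω.re * τ + 1))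
        (2 * ω.re / (2 * Real.sqrt s)) t := hds.sqrt hsne
    -- derivative of log part
    have hdlog : HasDerivAt (fun τ : ℝ => Real.log (2 * ω.re * τ + 1))
        (2 * ω.re / s) t := hds.log hsne
    -- complexify
    have hdE : HasDerivAt (fun τ : ℝ => Complex.exp (Complex.I * (b : ℂ)
        * ((Real.log (2 * ω.re * τ + 1) : ℝ) : ℂ)))
        (Complex.exp (Complex.I * (b : ℂ) * ((Real.log s : ℝ) : ℂ))
          * (Complex.I * (b : ℂ) * ((2 * ω.re / s : ℝ) : ℂ))) t :=
      ((hdlog.ofReal_comp).const_mul (Complex.I * (b : ℂ))).cexp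
    have hdc : HasDerivAt c
        (((2 * ω.re / (2 * Real.sqrt s) : ℝ) : ℂ)
          * Complex.exp (Complex.I * (b : ℂ) * ((Real.log s : ℝ) : ℂ))
        + ((Real.sqrt s : ℝ) : ℂ)
          * (Complex.exp (Complex.I * (b : ℂ) * ((Real.log s : ℝ) : ℂ))
            * (Complex.I * (b : ℂ) * ((2 * ω.re / s : ℝ) : ℂ)))) t := by
      exact (hdsqrt.ofReal_comp).mul hdE
    -- identify the derivative value with c t / s * ω
    have key0 : ∀ (x y u : ℝ) (E : ℂ), 0 < x → 0 < u →
        ((2 * x / (2 * Real.sqrt u) : ℝ) : ℂ) * E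
          + ((Real.sqrt u : ℝ) : ℂ) * (E * (Complex.I * ((y / (2 * x) : ℝ) : ℂ)
              * ((2 * x / u : ℝ) : ℂ)))
        = ((Real.sqrt u : ℝ) : ℂ) * E / (u : ℂ) * ((x : ℂ) + (y : ℂ) * Complex.I) := by
      intro x y u E hx hu
      have hsq : ((Real.sqrt u : ℝ) : ℂ) ^ 2 = (u : ℂ) := by
        norm_cast
        exact Real.sq_sqrt hu.le
      have hsqne' : ((Real.sqrt u : ℝ) : ℂ) ≠ 0 :=
        Complex.ofReal_ne_zero.2 (ne_of_gt (Real.sqrt_pos.2 hu))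
      have hxC : ((x : ℝ) : ℂ) ≠ 0 := Complex.ofReal_ne_zero.2 (ne_of_gt hx)
      push_cast
      rw [← hsq]
      field_simp
    have hct : c t = ((Real.sqrt s : ℝ) : ℂ)
        * Complex.exp (Complex.I * (b : ℂ) * ((Real.log s : ℝ) : ℂ)) := rfl
    have key : ((2 * ω.re / (2 * Real.sqrt s) : ℝ) : ℂ)
          * Complex.exp (Complex.I * (b : ℂ) * ((Real.log s : ℝ) : ℂ))
        + ((Real.sqrt s : ℝ) : ℂ)
          * (Complex.exp (Complex.I * (b : ℂ) * ((Real.log s : ℝ) : ℂ))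
            * (Complex.I * (b : ℂ) * ((2 * ω.re / s : ℝ) : ℂ)))
        = c t / (s : ℂ) * ω := by
      have := key0 ω.re ω.im s
        (Complex.exp (Complex.I * (b : ℂ) * ((Real.log s : ℝ) : ℂ))) hre hst
      rw [Complex.re_add_im] at this
      rw [hct, hb]
      exact this
    have hre2 : c t / (s : ℂ) * (ω * (w k - p))
        = (c t / (s : ℂ) * ω) * (w k - p) := by ring
    rw [hre2, ← key]
    have hfun : (fun τ => z τ k) = fun τ => p + c τ * (w k - p) := by
      funext τ; exact hzc τ k
    rw [hfun]
    exact ((hdc.mul_const (w k - p)).const_add p)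
  · funext k
    rw [hzc 0 k]
    simp [hc]
end

section
/- A self-similar configuration with linear velocity field and vanishing angular momentum has vanishing size: let w ∈ ℂ^n have pairwise distinct components and suppose V_k(w) = ω w_k for all k with ω ∈ ℂ, ω ≠ 0, and suppose L = Σ_{i<j} Γ_i Γ_j = 0. Then S(w) = Σ_k Γ_k |w_k|² = 0. -/
open Finset in
lemma pair_sum {n : ℕ} (f : Fin n → Fin n → ℂ) :
    ∑ k, ∑ l ∈ Finset.univ.filter (fun l => l ≠ k), f k l
      = ∑ k, ∑ l ∈ Finset.univ.filter (fun l => k < l), (f k l + f l k) := by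
  have hsplit : ∀ k : Fin n, ∑ l ∈ Finset.univ.filter (fun l => l ≠ k), f k l
      = ∑ l ∈ Finset.univ.filter (fun l => k < l), f k l
        + ∑ l ∈ Finset.univ.filter (fun l => l < k), f k l := by
    intro k
    rw [← Finset.sum_union]
    · apply Finset.sum_congr
      · ext l
        simp only [Finset.mem_filter, Finset.mem_union, Finset.mem_univ, true_and]
        constructor
        · intro h; exact (Ne.lt_or_gt h).symm.imp id id
        · rintro (h | h) <;> [exact h.ne'; exact h.ne]
      · intros; rfl
    · simp only [Finset.disjoint_left, Finset.mem_filter, Finset.mem_univ, true_and]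
      intro a h1 h2; exact absurd (h1.trans h2) (lt_irrefl _)
  simp only [hsplit, Finset.sum_add_distrib]
  congr 1
  exact Finset.sum_comm' (by intro x y; simp [and_comm])

lemma conj_mul_self' (z : ℂ) : (starRingEnd ℂ) z * z = ((‖z‖ : ℝ) : ℂ) ^ 2 := by
  rw [← Complex.normSq_eq_conj_mul_self]
  norm_cast
  rw [Complex.normSq_eq_norm_sq]

/-- A self-similar configuration with linear velocity field (`V_k(w) = ω w_k`, `ω ≠ 0`)
and vanishing angular momentum `L = 0` has vanishing size `S(w) = 0`. -/
theorem size_eq_zero_of_linear_velocity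
    (n : ℕ) (Γ : Fin n → ℝ) (hΓ : ∀ k, Γ k ≠ 0)
    (w : Fin n → ℂ) (hw : Function.Injective w)
    (ω : ℂ) (hω : ω ≠ 0)
    (hv : ∀ k, vortexVelocity n Γ w k = ω * w k)
    (hL : ∑ i, ∑ j ∈ Finset.univ.filter (fun j => i < j), Γ i * Γ j = 0) :
    ∑ k, Γ k * ‖w k‖ ^ 2 = 0 := by
  classical
  set c : Fin n → ℂ := fun k => (Γ k : ℂ) * (starRingEnd ℂ) (w k) with hc
  have key : ∀ k, c k * vortexVelocity n Γ w k
      = (Complex.I / (2 * Real.pi)) *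
        ∑ l ∈ Finset.univ.filter (fun l => l ≠ k),
          (Γ k : ℂ) * (Γ l : ℂ) * ((starRingEnd ℂ) (w k)) * (w k - w l)
            / ((‖w k - w l‖ ^ 2 : ℝ) : ℂ) := by
    intro k
    rw [vortexVelocity, mul_left_comm, Finset.mul_sum]
    congr 1
    refine Finset.sum_congr rfl fun l _ => ?_
    rw [hc]; ring
  have hT1 : ∑ k, c k * vortexVelocity n Γ w k
      = (Complex.I / (2 * Real.pi)) *
          ((∑ i, ∑ j ∈ Finset.univ.filter (fun j => i < j), Γ i * Γ j : ℝ) : ℂ) := by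
    simp only [key]
    rw [← Finset.mul_sum]
    congr 1
    rw [pair_sum (fun k l => (Γ k : ℂ) * (Γ l : ℂ) * ((starRingEnd ℂ) (w k)) * (w k - w l)
      / ((‖w k - w l‖ ^ 2 : ℝ) : ℂ))]
    rw [Complex.ofReal_sum]
    refine Finset.sum_congr rfl fun k _ => ?_
    rw [Complex.ofReal_sum]
    refine Finset.sum_congr rfl fun l hl => ?_
    have hkl : k < l := (Finset.mem_filter.mp hl).2
    have hne : w k - w l ≠ 0 := sub_ne_zero.mpr (fun h => (hkl.ne (hw h)))
    have hnz : ((‖w k - w l‖ ^ 2 : ℝ) : ℂ) ≠ 0 := by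
      simpa [sub_eq_zero] using hne
    have hnorm : ((‖w k - w l‖ ^ 2 : ℝ) : ℂ) = (starRingEnd ℂ) (w k - w l) * (w k - w l) := by
      rw [← Complex.normSq_eq_conj_mul_self]
      norm_cast
      rw [Complex.normSq_eq_norm_sq]
    rw [show w l - w k = -(w k - w l) from (neg_sub _ _).symm, norm_neg,
      ← add_div, div_eq_iff hnz, hnorm, map_sub]
    push_cast
    ring
  have hT2 : ∑ k, c k * vortexVelocity n Γ w k
      = ω * ((∑ k, Γ k * ‖w k‖ ^ 2 : ℝ) : ℂ) := by
    push_cast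
    rw [Finset.mul_sum]
    refine Finset.sum_congr rfl fun k _ => ?_
    rw [hv k, hc]
    rw [show ((Γ k : ℂ) * (starRingEnd ℂ) (w k)) * (ω * w k)
      = ω * ((Γ k : ℂ) * ((starRingEnd ℂ) (w k) * w k)) from by ring, conj_mul_self']
  rw [hL] at hT1
  rw [hT1] at hT2
  simp only [Complex.ofReal_zero, mul_zero] at hT2
  have := (mul_eq_zero.mp hT2.symm).resolve_left hω
  exact_mod_cast Complex.ofReal_eq_zero.mp this
end

section
/- Proportionality of all velocities to positions follows from proportionality at n−3 indices: let n ≥ 3, let w ∈ ℂ^n have pairwise distinct components, and suppose L = Σ_{i<j} Γ_i Γ_j = 0, M(w) = Σ_k Γ_k w_k = 0, S(w) = Σ_k Γ_k |w_k|² = 0, and V_1(w) w_l − V_l(w) w_1 = 0 for all indices l with 4 ≤ l ≤ n. Then V_1(w) w_l − V_l(w) w_1 = 0 for all indices l (in particular for l = 2 and l = 3). -/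
namespace VortexAux

open Finset

/-- `conj z * z = ‖z‖²`. -/
lemma conj_mul_self (z : ℂ) : (starRingEnd ℂ) z * z = ((‖z‖ ^ 2 : ℝ) : ℂ) := by
  rw [mul_comm, Complex.mul_conj]
  norm_cast
  rw [Complex.normSq_eq_norm_sq]

/-- The basic summand. -/
noncomputable def fA {n : ℕ} (Γ : Fin n → ℝ) (w : Fin n → ℂ) (k l : Fin n) : ℂ :=
  (Γ k : ℂ) * (Γ l : ℂ) * ((w k - w l) / ((‖w k - w l‖ ^ 2 : ℝ) : ℂ))

lemma fA_anti {n : ℕ} (Γ : Fin n → ℝ) (w : Fin n → ℂ) (k l : Fin n) :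
    fA Γ w k l = - fA Γ w l k := by
  unfold fA
  rw [norm_sub_rev (w l) (w k)]
  ring

lemma vel_mul {n : ℕ} (Γ : Fin n → ℝ) (w : Fin n → ℂ) (k : Fin n) :
    (Γ k : ℂ) * vortexVelocity n Γ w k
      = (Complex.I / (2 * Real.pi)) * ∑ l, fA Γ w k l := by
  rw [vortexVelocity, Finset.sum_filter_of_ne (fun l _ h => ?_)]
  · rw [mul_left_comm, Finset.mul_sum]
    congr 1
    refine Finset.sum_congr rfl fun l _ => ?_
    unfold fA; ring
  · intro hlk; subst hlk; simp at h

lemma sum_fA {n : ℕ} (Γ : Fin n → ℝ) (w : Fin n → ℂ) :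
    ∑ k, ∑ l, fA Γ w k l = 0 := by
  have h : (∑ k, ∑ l, fA Γ w k l) = - ∑ k, ∑ l, fA Γ w k l := by
    conv_lhs => rw [Finset.sum_comm]
    calc ∑ l, ∑ k, fA Γ w k l = ∑ l, ∑ k, - fA Γ w l k := by
          refine Finset.sum_congr rfl fun l _ => Finset.sum_congr rfl fun k _ => ?_
          exact fA_anti Γ w k l
      _ = - ∑ l, ∑ k, fA Γ w l k := by
          simp [Finset.sum_neg_distrib]
  exact add_self_eq_zero.mp (by linear_combination h)

lemma pair_eq {n : ℕ} (Γ : Fin n → ℝ) (w : Fin n → ℂ) (hw : Function.Injective w)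
    (k l : Fin n) :
    (starRingEnd ℂ) (w k) * fA Γ w k l + (starRingEnd ℂ) (w l) * fA Γ w l k
      = if k = l then 0 else (Γ k : ℂ) * (Γ l : ℂ) := by
  by_cases hkl : k = l
  · subst hkl; simp [fA]
  · rw [if_neg hkl]
    have hz : w k - w l ≠ 0 := sub_ne_zero.mpr fun h => hkl (hw h)
    have hcz : ((‖w k - w l‖ ^ 2 : ℝ) : ℂ) ≠ 0 := by
      exact_mod_cast pow_ne_zero 2 (norm_ne_zero_iff.mpr hz)
    have key : ((starRingEnd ℂ) (w k) - (starRingEnd ℂ) (w l)) * (w k - w l)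
        = ((‖w k - w l‖ ^ 2 : ℝ) : ℂ) := by
      rw [← map_sub]; exact conj_mul_self (w k - w l)
    have hdiv : ((‖w k - w l‖ ^ 2 : ℝ) : ℂ) * (((‖w k - w l‖ ^ 2 : ℝ) : ℂ))⁻¹ = 1 :=
      mul_inv_cancel₀ hcz
    unfold fA
    rw [norm_sub_rev (w l) (w k)]
    linear_combination ((Γ k : ℂ) * (Γ l : ℂ) * (((‖w k - w l‖ ^ 2 : ℝ) : ℂ))⁻¹) * key
      + (Γ k : ℂ) * (Γ l : ℂ) * hdiv

lemma sum_dA {n : ℕ} (Γ : Fin n → ℝ) (w : Fin n → ℂ) (hw : Function.Injective w)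
    (hL : ∑ i, ∑ j ∈ Finset.univ.filter (fun j => i < j), Γ i * Γ j = 0) :
    ∑ k, ∑ l, (starRingEnd ℂ) (w k) * fA Γ w k l = 0 := by
  set T := ∑ k, ∑ l, (starRingEnd ℂ) (w k) * fA Γ w k l with hT
  have h2 : T + T = ∑ k, ∑ l, ((starRingEnd ℂ) (w k) * fA Γ w k l
      + (starRingEnd ℂ) (w l) * fA Γ w l k) := by
    rw [hT]
    nth_rewrite 2 [Finset.sum_comm]
    rw [← Finset.sum_add_distrib]
    refine Finset.sum_congr rfl fun k _ => ?_
    rw [← Finset.sum_add_distrib]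
  have h3 : T + T = ∑ k, ∑ l, (if k = l then 0 else (Γ k : ℂ) * (Γ l : ℂ)) := by
    rw [h2]
    exact Finset.sum_congr rfl fun k _ => Finset.sum_congr rfl fun l _ =>
      pair_eq Γ w hw k l
  -- split the off-diagonal sum according to `<` and `>`
  have h4 : ∑ k, ∑ l, (if k = l then (0:ℂ) else (Γ k : ℂ) * (Γ l : ℂ))
      = (∑ k, ∑ l, (if k < l then (Γ k : ℂ) * (Γ l : ℂ) else 0))
        + ∑ k, ∑ l, (if l < k then (Γ k : ℂ) * (Γ l : ℂ) else 0) := by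
    rw [← Finset.sum_add_distrib]
    refine Finset.sum_congr rfl fun k _ => ?_
    rw [← Finset.sum_add_distrib]
    refine Finset.sum_congr rfl fun l _ => ?_
    rcases lt_trichotomy k l with h | h | h
    · rw [if_neg (ne_of_lt h), if_pos h, if_neg (by omega), add_zero]
    · rw [if_pos h, if_neg (by omega), if_neg (by omega), add_zero]
    · rw [if_neg (Ne.symm (ne_of_lt h)), if_neg (by omega), if_pos h, zero_add]
  have h5 : ∑ k, ∑ l, (if l < k then (Γ k : ℂ) * (Γ l : ℂ) else 0)
      = ∑ k, ∑ l, (if k < l then (Γ k : ℂ) * (Γ l : ℂ) else 0) := by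
    rw [Finset.sum_comm]
    exact Finset.sum_congr rfl fun k _ => Finset.sum_congr rfl fun l _ => by
      rw [mul_comm]
  have hLC : ∑ k, ∑ l, (if k < l then (Γ k : ℂ) * (Γ l : ℂ) else 0) = 0 := by
    calc ∑ k, ∑ l, (if k < l then (Γ k : ℂ) * (Γ l : ℂ) else 0)
        = ∑ k, ∑ l ∈ Finset.univ.filter (fun l => k < l), (Γ k : ℂ) * (Γ l : ℂ) :=
          Finset.sum_congr rfl fun k _ => (Finset.sum_filter _ _).symm
      _ = ((∑ i, ∑ j ∈ Finset.univ.filter (fun j => i < j), Γ i * Γ j : ℝ) : ℂ) := by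
          push_cast; rfl
      _ = 0 := by rw [hL]; norm_num
  have : T + T = 0 := by rw [h3, h4, h5, hLC]; ring
  exact add_self_eq_zero.mp this

end VortexAux

/-- Proportionality of all velocities to positions follows from proportionality at the
`n − 3` indices `l = 4, ..., n` (here 0-indexed: `3 ≤ l`), given `L = 0`, `M(w) = 0` and
`S(w) = 0`. The first vortex plays the role of the fixed index `k = 1` (0-indexed `0`). -/
theorem proportionality_extends
    (n : ℕ) (hn : 3 ≤ n) (Γ : Fin n → ℝ) (hΓ : ∀ k, Γ k ≠ 0)
    (w : Fin n → ℂ) (hw : Function.Injective w)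
    (hL : ∑ i, ∑ j ∈ Finset.univ.filter (fun j => i < j), Γ i * Γ j = 0)
    (hM : ∑ k, (Γ k : ℂ) * w k = 0)
    (hS : ∑ k, Γ k * ‖w k‖ ^ 2 = 0)
    (hD : ∀ l : Fin n, 3 ≤ (l : ℕ) →
        vortexVelocity n Γ w ⟨0, by omega⟩ * w l
          - vortexVelocity n Γ w l * w ⟨0, by omega⟩ = 0) :
    ∀ l : Fin n,
        vortexVelocity n Γ w ⟨0, by omega⟩ * w l
          - vortexVelocity n Γ w l * w ⟨0, by omega⟩ = 0 := by
  open VortexAux in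
  set i0 : Fin n := ⟨0, by omega⟩ with hi0
  set i1 : Fin n := ⟨1, by omega⟩ with hi1
  set i2 : Fin n := ⟨2, by omega⟩ with hi2
  set V : Fin n → ℂ := vortexVelocity n Γ w with hV
  set D : Fin n → ℂ := fun l => V i0 * w l - V l * w i0 with hDdef
  -- Σ Γ_k V_k = 0
  have hsumV : ∑ k, (Γ k : ℂ) * V k = 0 := by
    have : ∑ k, (Γ k : ℂ) * V k
        = (Complex.I / (2 * Real.pi)) * ∑ k, ∑ l, fA Γ w k l := by
      rw [Finset.mul_sum]
      exact Finset.sum_congr rfl fun k _ => vel_mul Γ w k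
    rw [this, sum_fA, mul_zero]
  -- Σ Γ_k conj(w_k) V_k = 0
  have hsumCV : ∑ k, (Γ k : ℂ) * (starRingEnd ℂ) (w k) * V k = 0 := by
    have : ∑ k, (Γ k : ℂ) * (starRingEnd ℂ) (w k) * V k
        = (Complex.I / (2 * Real.pi)) * ∑ k, ∑ l, (starRingEnd ℂ) (w k) * fA Γ w k l := by
      rw [Finset.mul_sum]
      refine Finset.sum_congr rfl fun k _ => ?_
      have := vel_mul Γ w k
      calc (Γ k : ℂ) * (starRingEnd ℂ) (w k) * V k
          = (starRingEnd ℂ) (w k) * ((Γ k : ℂ) * V k) := by ring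
        _ = (starRingEnd ℂ) (w k) * ((Complex.I / (2 * Real.pi)) * ∑ l, fA Γ w k l) := by
            rw [this]
        _ = Complex.I / (2 * Real.pi) * ∑ l, (starRingEnd ℂ) (w k) * fA Γ w k l := by
            rw [mul_left_comm, Finset.mul_sum]
    rw [this, sum_dA Γ w hw hL, mul_zero]
  -- Σ Γ_k conj(w_k) w_k = S = 0
  have hSC : ∑ k, (Γ k : ℂ) * ((starRingEnd ℂ) (w k) * w k) = 0 := by
    have := congrArg (fun x : ℝ => (x : ℂ)) hS
    push_cast at this
    rw [← this]
    exact Finset.sum_congr rfl fun k _ => by rw [conj_mul_self]; push_cast; ring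
  -- two linear relations on D
  have e1 : ∑ k, (Γ k : ℂ) * D k = 0 := by
    have : ∑ k, (Γ k : ℂ) * D k
        = V i0 * ∑ k, (Γ k : ℂ) * w k - w i0 * ∑ k, (Γ k : ℂ) * V k := by
      rw [Finset.mul_sum, Finset.mul_sum, ← Finset.sum_sub_distrib]
      exact Finset.sum_congr rfl fun k _ => by simp only [hDdef]; ring
    rw [this, hM, hsumV]; ring
  have e2 : ∑ k, (Γ k : ℂ) * (starRingEnd ℂ) (w k) * D k = 0 := by
    have : ∑ k, (Γ k : ℂ) * (starRingEnd ℂ) (w k) * D k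
        = V i0 * ∑ k, (Γ k : ℂ) * ((starRingEnd ℂ) (w k) * w k)
          - w i0 * ∑ k, (Γ k : ℂ) * (starRingEnd ℂ) (w k) * V k := by
      rw [Finset.mul_sum, Finset.mul_sum, ← Finset.sum_sub_distrib]
      exact Finset.sum_congr rfl fun k _ => by simp only [hDdef]; ring
    rw [this, hSC, hsumCV]; ring
  -- D vanishes away from i1, i2
  have hvan : ∀ k : Fin n, k ≠ i1 → k ≠ i2 → D k = 0 := by
    intro k h1 h2
    by_cases h3 : 3 ≤ (k : ℕ)
    · exact hD k h3
    · have hk0 : (k : ℕ) = 0 := by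
        have hne1 : (k : ℕ) ≠ 1 := fun h => h1 (Fin.ext h)
        have hne2 : (k : ℕ) ≠ 2 := fun h => h2 (Fin.ext h)
        omega
      have : k = i0 := Fin.ext hk0
      subst this
      simp only [hDdef]; ring
  have i12 : i1 ≠ i2 := fun h => by simpa [hi1, hi2] using congrArg Fin.val h
  -- reduce sums to two terms
  have red : ∀ g : Fin n → ℂ, (∀ k, k ≠ i1 → k ≠ i2 → g k = 0) →
      ∑ k, g k = g i1 + g i2 := by
    intro g hg
    rw [show (Finset.univ : Finset (Fin n)) = {i1, i2} ∪ (Finset.univ \ {i1, i2}) from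
      (Finset.union_sdiff_of_subset (Finset.subset_univ _)).symm]
    rw [Finset.sum_union (Finset.disjoint_sdiff), Finset.sum_pair i12]
    have : ∑ k ∈ Finset.univ \ {i1, i2}, g k = 0 := by
      refine Finset.sum_eq_zero fun k hk => ?_
      simp only [Finset.mem_sdiff, Finset.mem_insert, Finset.mem_singleton] at hk
      exact hg k (fun h => hk.2 (Or.inl h)) (fun h => hk.2 (Or.inr h))
    rw [this, add_zero]
  have A1 : (Γ i1 : ℂ) * D i1 + (Γ i2 : ℂ) * D i2 = 0 := by
    rw [← red (fun k => (Γ k : ℂ) * D k)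
      (fun k h1 h2 => by show (Γ k : ℂ) * D k = 0; rw [hvan k h1 h2, mul_zero])]
    exact e1
  have A2 : (Γ i1 : ℂ) * (starRingEnd ℂ) (w i1) * D i1
      + (Γ i2 : ℂ) * (starRingEnd ℂ) (w i2) * D i2 = 0 := by
    rw [← red (fun k => (Γ k : ℂ) * (starRingEnd ℂ) (w k) * D k)
      (fun k h1 h2 => by simp only [hvan k h1 h2, mul_zero])]
    exact e2
  -- solve
  have hΓ1 : (Γ i1 : ℂ) ≠ 0 := by exact_mod_cast hΓ i1
  have hΓ2 : (Γ i2 : ℂ) ≠ 0 := by exact_mod_cast hΓ i2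
  have hw12 : (starRingEnd ℂ) (w i1) - (starRingEnd ℂ) (w i2) ≠ 0 := by
    intro h
    have : w i1 = w i2 := by
      have h' : (starRingEnd ℂ) (w i1) = (starRingEnd ℂ) (w i2) := sub_eq_zero.mp h
      simpa using congrArg (starRingEnd ℂ) h'
    exact i12 (hw this)
  have key : (Γ i1 : ℂ) * ((starRingEnd ℂ) (w i1) - (starRingEnd ℂ) (w i2)) * D i1 = 0 := by
    linear_combination A2 - (starRingEnd ℂ) (w i2) * A1
  have hD1 : D i1 = 0 := by
    rcases mul_eq_zero.mp key with h | h
    · rcases mul_eq_zero.mp h with h' | h'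
      · exact absurd h' hΓ1
      · exact absurd h' hw12
    · exact h
  have hD2 : D i2 = 0 := by
    have : (Γ i2 : ℂ) * D i2 = 0 := by linear_combination A1 - (Γ i1 : ℂ) * hD1
    rcases mul_eq_zero.mp this with h | h
    · exact absurd h hΓ2
    · exact h
  -- conclude
  intro l
  by_cases h3 : 3 ≤ (l : ℕ)
  · exact hD l h3
  · show D l = 0
    have hl : (l : ℕ) = 0 ∨ (l : ℕ) = 1 ∨ (l : ℕ) = 2 := by omega
    rcases hl with h | h | h
    · rw [show l = i0 from Fin.ext h]
      simp only [hDdef]; ring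
    · rw [show l = i1 from Fin.ext h]; exact hD1
    · rw [show l = i2 from Fin.ext h]; exact hD2
end
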